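/- (Duality Gap Bound, DGB) Fix γ ∈ (0,1], λ > 0, a finite index set T, and symmetric matrices H_t ∈ ℝ^{d×d} (t ∈ T). Let M ⪰ O be a primal feasible solution, let (α, Γ) with α ∈ [0,1]^T and Γ ⪰ O be a dual feasible pair, and let M* be optimal for λ, i.e., M* ⪰ O and P_λ(M*) ≤ P_λ(M') for all M' ⪰ O. Then ‖M* − M‖_F² ≤ 2(P_λ(M) − D_λ(α,Γ))/λ. -/

import Mathlib

open scoped BigOperators
open scoped Matrix

/-- Frobenius inner product ⟨A,B⟩ = tr(Aᵀ B). -/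
noncomputable def frob {d : ℕ} (A B : Matrix (Fin d) (Fin d) ℝ) : ℝ :=
  Matrix.trace (Aᵀ * B)

/-- Frobenius norm ‖A‖_F = √⟨A,A⟩. -/
noncomputable def frobNorm {d : ℕ} (A : Matrix (Fin d) (Fin d) ℝ) : ℝ :=
  Real.sqrt (frob A A)

/-- Smoothed hinge loss ℓ_γ. -/
noncomputable def shinge (γ x : ℝ) : ℝ :=
  if 1 < x then 0 else if 1 - γ ≤ x then (1 - x) ^ 2 / (2 * γ) else 1 - x - γ / 2

/-- Derivative of the smoothed hinge loss ℓ_γ'. -/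
noncomputable def shinge' (γ x : ℝ) : ℝ :=
  if 1 < x then 0 else if 1 - γ ≤ x then -(1 - x) / γ else -1

/-- Primal objective P_λ(M) = Σ_t ℓ_γ(⟨M,H_t⟩) + (λ/2)‖M‖_F². -/
noncomputable def Pobj {d : ℕ} {ι : Type*} (γ lam : ℝ) (T : Finset ι)
    (H : ι → Matrix (Fin d) (Fin d) ℝ) (M : Matrix (Fin d) (Fin d) ℝ) : ℝ :=
  (∑ t ∈ T, shinge γ (frob M (H t))) + lam / 2 * frobNorm M ^ 2

/-- Gradient ∇P_λ(M) = Σ_t ℓ_γ'(⟨M,H_t⟩) H_t + λ M. -/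
noncomputable def gradP {d : ℕ} {ι : Type*} (γ lam : ℝ) (T : Finset ι)
    (H : ι → Matrix (Fin d) (Fin d) ℝ) (M : Matrix (Fin d) (Fin d) ℝ) :
    Matrix (Fin d) (Fin d) ℝ :=
  (∑ t ∈ T, shinge' γ (frob M (H t)) • H t) + lam • M

/-- M_λ(α,Γ) = (1/λ)(Σ_t α_t H_t + Γ). -/
noncomputable def Mlam {d : ℕ} {ι : Type*} (lam : ℝ) (T : Finset ι)
    (H : ι → Matrix (Fin d) (Fin d) ℝ) (α : ι → ℝ) (Γ : Matrix (Fin d) (Fin d) ℝ) :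
    Matrix (Fin d) (Fin d) ℝ :=
  (1 / lam) • ((∑ t ∈ T, α t • H t) + Γ)

/-- Dual objective D_λ(α,Γ) = −(γ/2)‖α‖₂² + Σ_t α_t − (λ/2)‖M_λ(α,Γ)‖_F². -/
noncomputable def Dobj {d : ℕ} {ι : Type*} (γ lam : ℝ) (T : Finset ι)
    (H : ι → Matrix (Fin d) (Fin d) ℝ) (α : ι → ℝ) (Γ : Matrix (Fin d) (Fin d) ℝ) : ℝ :=
  -(γ / 2) * (∑ t ∈ T, α t ^ 2) + (∑ t ∈ T, α t) -
    lam / 2 * frobNorm (Mlam lam T H α Γ) ^ 2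

section frobLemmas
variable {d : ℕ} (A B C : Matrix (Fin d) (Fin d) ℝ)

lemma frob_eq : frob A B = ∑ j, ∑ i, A i j * B i j := by
  simp [frob, Matrix.trace, Matrix.diag, Matrix.mul_apply, Matrix.transpose_apply]

lemma frob_nonneg : 0 ≤ frob A A := by
  rw [frob_eq]
  exact Finset.sum_nonneg fun j _ => Finset.sum_nonneg fun i _ => mul_self_nonneg _

lemma frobNorm_sq : frobNorm A ^ 2 = frob A A := Real.sq_sqrt (frob_nonneg A)

lemma frob_comm : frob A B = frob B A := by
  simp [frob_eq, mul_comm]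

lemma frob_add_right : frob A (B + C) = frob A B + frob A C := by
  simp [frob_eq, mul_add, Finset.sum_add_distrib]

lemma frob_add_left : frob (A + B) C = frob A C + frob B C := by
  rw [frob_comm, frob_add_right, frob_comm C A, frob_comm C B]

lemma frob_smul_right (c : ℝ) : frob A (c • B) = c * frob A B := by
  simp [frob_eq, Finset.mul_sum, mul_left_comm]

lemma frob_smul_left (c : ℝ) : frob (c • A) B = c * frob A B := by
  rw [frob_comm, frob_smul_right, frob_comm]

lemma frob_zero_right : frob A (0 : Matrix (Fin d) (Fin d) ℝ) = 0 := by
  simp [frob_eq]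

lemma frob_sum_right {ι : Type*} (T : Finset ι) (f : ι → Matrix (Fin d) (Fin d) ℝ) :
    frob A (∑ t ∈ T, f t) = ∑ t ∈ T, frob A (f t) := by
  classical
  induction T using Finset.induction with
  | empty => simp [frob_zero_right]
  | insert _ _ h ih => simp [Finset.sum_insert h, frob_add_right, ih]

lemma frob_sub_sub : frob (A - B) (A - B) = frob A A - 2 * frob A B + frob B B := by
  have h1 : A - B = A + (-1 : ℝ) • B := by simp [sub_eq_add_neg]
  simp only [h1, frob_add_left, frob_add_right, frob_smul_left, frob_smul_right,
    frob_comm B A]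
  ring

lemma frob_psd_nonneg (hA : A.PosSemidef) (hB : B.PosSemidef) : 0 ≤ frob A B := by
  obtain ⟨C, hC⟩ : ∃ C : Matrix (Fin d) (Fin d) ℝ, B = Cᴴ * C := by
    open scoped MatrixOrder in
    obtain ⟨C, hC⟩ := CStarAlgebra.nonneg_iff_eq_star_mul_self.mp hB.nonneg
    exact ⟨C, hC⟩
  have hAt : Aᵀ = A := by
    have := hA.isHermitian
    simpa [Matrix.IsHermitian, Matrix.conjTranspose_eq_transpose_of_trivial] using this
  have key : frob A B = Matrix.trace ((C * A * Cᴴ)) := by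
    rw [frob, hAt, hC, ← Matrix.mul_assoc, Matrix.trace_mul_comm]
    congr 1
    rw [Matrix.mul_assoc]
  rw [key]
  have hP : (C * A * Cᴴ).PosSemidef := hA.mul_mul_conjTranspose_same C
  have hdiag : ∀ i, 0 ≤ (C * A * Cᴴ) i i := by
    intro i
    exact hP.diag_nonneg
  exact Finset.sum_nonneg fun i _ => hdiag i

lemma posSemidef_smul {c : ℝ} (hc : 0 ≤ c) (hA : A.PosSemidef) : (c • A).PosSemidef := by
  constructor
  · have := hA.isHermitian
    simpa [Matrix.IsHermitian] using congrArg (c • ·) this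
  · intro x
    have h := hA.2 x
    simpa [mul_smul_comm, smul_mul_assoc, ← Finsupp.smul_sum, Finsupp.mul_sum, mul_assoc, mul_left_comm] using smul_nonneg hc h

end frobLemmas

lemma shinge_fenchel {γ a : ℝ} (hγ : 0 < γ) (ha0 : 0 ≤ a) (ha1 : a ≤ 1) (x : ℝ) :
    a * (1 - x) - γ * a ^ 2 / 2 ≤ shinge γ x := by
  unfold shinge
  split_ifs with h1 h2
  · nlinarith [mul_nonneg hγ.le (mul_self_nonneg a)]
  · rw [le_div_iff₀ (by positivity : (0:ℝ) < 2 * γ)]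
    nlinarith [sq_nonneg ((1 - x) - γ * a)]
  · push_neg at h1 h2
    have key : 0 ≤ (1 - x) - γ * (1 + a) / 2 := by nlinarith
    nlinarith [mul_nonneg (by linarith : (0:ℝ) ≤ 1 - a) key]

lemma shinge_attain {γ : ℝ} (hγ : 0 < γ) (x : ℝ) :
    ∃ a, 0 ≤ a ∧ a ≤ 1 ∧ shinge γ x = a * (1 - x) - γ * a ^ 2 / 2 := by
  unfold shinge
  split_ifs with h1 h2
  · exact ⟨0, le_refl _, zero_le_one, by ring⟩
  · push_neg at h1
    refine ⟨(1 - x) / γ, div_nonneg (by linarith) hγ.le, ?_, ?_⟩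
    · rw [div_le_one hγ]; linarith
    · field_simp
      ring
  · exact ⟨1, zero_le_one, le_refl _, by ring⟩

lemma shinge_convex {γ θ : ℝ} (hγ : 0 < γ) (hθ0 : 0 ≤ θ) (hθ1 : θ ≤ 1) (x y : ℝ) :
    shinge γ (θ * x + (1 - θ) * y) ≤ θ * shinge γ x + (1 - θ) * shinge γ y := by
  obtain ⟨a, ha0, ha1, hEq⟩ := shinge_attain hγ (θ * x + (1 - θ) * y)
  have hx := mul_le_mul_of_nonneg_left (shinge_fenchel hγ ha0 ha1 x) hθ0
  have hy := mul_le_mul_of_nonneg_left (shinge_fenchel hγ ha0 ha1 y) (by linarith : (0:ℝ) ≤ 1 - θ)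
  have key : a * (1 - (θ * x + (1 - θ) * y)) - γ * a ^ 2 / 2 =
      θ * (a * (1 - x) - γ * a ^ 2 / 2) + (1 - θ) * (a * (1 - y) - γ * a ^ 2 / 2) := by ring
  rw [hEq, key]
  linarith

/-- Weak duality: the dual objective is at most the primal objective at any PSD point. -/
lemma weak_duality {d : ℕ} {ι : Type*} (γ lam : ℝ)
    (hγ : 0 < γ) (hlam : 0 < lam)
    (T : Finset ι) (H : ι → Matrix (Fin d) (Fin d) ℝ)
    (M : Matrix (Fin d) (Fin d) ℝ) (α : ι → ℝ) (Γ : Matrix (Fin d) (Fin d) ℝ)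
    (hM : M.PosSemidef) (hα : ∀ t ∈ T, 0 ≤ α t ∧ α t ≤ 1) (hΓ : Γ.PosSemidef) :
    Dobj γ lam T H α Γ ≤ Pobj γ lam T H M := by
  classical
  set N := Mlam lam T H α Γ with hNdef
  set S1 := ∑ t ∈ T, α t with hS1
  set S2 := ∑ t ∈ T, α t * frob M (H t) with hS2
  set S3 := ∑ t ∈ T, α t ^ 2 with hS3
  have hN : frob M N = (1 / lam) * (S2 + frob M Γ) := by
    rw [hNdef]
    unfold Mlam
    rw [frob_smul_right, frob_add_right, frob_sum_right]
    simp [frob_smul_right, hS2]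
  have hlamN : lam * frob M N = S2 + frob M Γ := by
    rw [hN]; field_simp
  have hΓ0 : 0 ≤ frob M Γ := frob_psd_nonneg M Γ hM hΓ
  have hsub := frob_sub_sub M N
  have hq : 0 ≤ frob (M - N) (M - N) := frob_nonneg _
  have hq' : 0 ≤ frob M M - 2 * frob M N + frob N N := by linarith [hsub ▸ hq]
  have h5 : lam * frob M N ≤ lam / 2 * frob M M + lam / 2 * frob N N := by
    nlinarith [mul_nonneg hlam.le hq']
  have hF : S1 - S2 - γ / 2 * S3 ≤ ∑ t ∈ T, shinge γ (frob M (H t)) := by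
    have hsum := Finset.sum_le_sum
      (fun t ht => shinge_fenchel hγ (hα t ht).1 (hα t ht).2 (frob M (H t)))
    have e : ∑ t ∈ T, (α t * (1 - frob M (H t)) - γ * α t ^ 2 / 2)
        = S1 - S2 - γ / 2 * S3 := by
      rw [hS1, hS2, hS3, ← Finset.sum_sub_distrib, Finset.mul_sum, ← Finset.sum_sub_distrib]
      exact Finset.sum_congr rfl fun t _ => by ring
    linarith [e ▸ hsum]
  unfold Dobj Pobj
  rw [frobNorm_sq, frobNorm_sq, ← hNdef, ← hS1, ← hS3]
  linarith

/-- Duality Gap Bound (DGB). -/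
theorem duality_gap_bound {d : ℕ} {ι : Type*} (γ lam : ℝ)
    (hγ : 0 < γ) (hγ1 : γ ≤ 1) (hlam : 0 < lam)
    (T : Finset ι) (H : ι → Matrix (Fin d) (Fin d) ℝ)
    (hH : ∀ t ∈ T, (H t).IsSymm)
    (M Mstar : Matrix (Fin d) (Fin d) ℝ) (α : ι → ℝ) (Γ : Matrix (Fin d) (Fin d) ℝ)
    (hM : M.PosSemidef)
    (hα : ∀ t ∈ T, 0 ≤ α t ∧ α t ≤ 1) (hΓ : Γ.PosSemidef)
    (hMstar : Mstar.PosSemidef)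
    (hopt : ∀ M' : Matrix (Fin d) (Fin d) ℝ, M'.PosSemidef →
      Pobj γ lam T H Mstar ≤ Pobj γ lam T H M') :
    frobNorm (Mstar - M) ^ 2 ≤ 2 * (Pobj γ lam T H M - Dobj γ lam T H α Γ) / lam := by
  classical
  set c := frob (M - Mstar) (M - Mstar) with hc
  have hc0 : 0 ≤ c := frob_nonneg _
  set K := Pobj γ lam T H M - Pobj γ lam T H Mstar with hK
  have hK0 : 0 ≤ K := sub_nonneg.2 (hopt M hM)
  -- strong convexity estimate for each θ ∈ (0,1)
  have main : ∀ θ : ℝ, 0 < θ → θ < 1 → lam / 2 * ((1 - θ) * c) ≤ K := by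
    intro θ hθ0 hθ1
    set Z := θ • M + (1 - θ) • Mstar with hZdef
    have hZ : Z.PosSemidef :=
      (posSemidef_smul M hθ0.le hM).add (posSemidef_smul Mstar (by linarith) hMstar)
    have h1 : Pobj γ lam T H Mstar ≤ Pobj γ lam T H Z := hopt Z hZ
    have hlin : ∀ t, frob Z (H t) = θ * frob M (H t) + (1 - θ) * frob Mstar (H t) := by
      intro t
      rw [hZdef, frob_add_left, frob_smul_left, frob_smul_left]
    have hloss : ∑ t ∈ T, shinge γ (frob Z (H t)) ≤
        θ * ∑ t ∈ T, shinge γ (frob M (H t)) +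
        (1 - θ) * ∑ t ∈ T, shinge γ (frob Mstar (H t)) := by
      rw [Finset.mul_sum, Finset.mul_sum, ← Finset.sum_add_distrib]
      refine Finset.sum_le_sum fun t ht => ?_
      rw [hlin t]
      exact shinge_convex hγ hθ0.le hθ1.le _ _
    have hquad : frob Z Z = θ * frob M M + (1 - θ) * frob Mstar Mstar - θ * (1 - θ) * c := by
      have hexp : frob Z Z = θ ^ 2 * frob M M + 2 * θ * (1 - θ) * frob M Mstar
          + (1 - θ) ^ 2 * frob Mstar Mstar := by
        simp only [hZdef, frob_add_left, frob_add_right, frob_smul_left, frob_smul_right,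
          frob_comm Mstar M]
        ring
      rw [hexp, hc, frob_sub_sub]
      ring
    have hPZ : Pobj γ lam T H Z ≤ θ * Pobj γ lam T H M + (1 - θ) * Pobj γ lam T H Mstar
        - lam / 2 * (θ * (1 - θ) * c) := by
      unfold Pobj
      rw [frobNorm_sq, frobNorm_sq, frobNorm_sq, hquad]
      nlinarith [hloss]
    have h2 : θ * (lam / 2 * ((1 - θ) * c)) ≤ θ * K := by
      rw [hK]
      nlinarith [h1.trans hPZ]
    exact le_of_mul_le_mul_left h2 hθ0
  -- pass to the limit θ → 0 (via a contradiction argument)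
  have hsc : lam / 2 * c ≤ K := by
    by_contra hcon
    push_neg at hcon
    set C := lam / 2 * c with hC
    have hCpos : 0 < C := lt_of_le_of_lt hK0 hcon
    have hθ0 : 0 < (C - K) / (2 * C) := div_pos (by linarith) (by linarith)
    have hθ1 : (C - K) / (2 * C) < 1 := by
      rw [div_lt_one (by linarith)]
      linarith
    have h := main _ hθ0 hθ1
    have h' : (1 - (C - K) / (2 * C)) * C ≤ K := by
      have e1 : lam / 2 * ((1 - (C - K) / (2 * C)) * c) = (1 - (C - K) / (2 * C)) * C := by
        rw [hC]; ring
      linarith [e1 ▸ h]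
    have e2 : (C - K) / (2 * C) * C = (C - K) / 2 := by
      field_simp
    nlinarith [h', e2]
  -- weak duality
  have hwd : Dobj γ lam T H α Γ ≤ Pobj γ lam T H Mstar :=
    weak_duality γ lam hγ hlam T H Mstar α Γ hMstar hα hΓ
  -- assemble
  have hswap : frob (Mstar - M) (Mstar - M) = c := by
    rw [hc, frob_sub_sub, frob_sub_sub, frob_comm Mstar M]
    ring
  rw [frobNorm_sq, hswap, le_div_iff₀ hlam]
  nlinarith [hsc, hwd]
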